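/- Let L be a set of points all contained in a cone F with apex p of opening angle π/3, such that each q ∈ L satisfies |qp| ≤ r_q. Then the sequence of points of L sorted in ascending order of associated radii is a chain: for any two points x before y in the sorted order (so r_x ≤ r_y), the transmission graph contains the edge from y to x, i.e., |xy| ≤ r_y. -/

import Mathlib

open Real

lemma inner_b_ge {V : Type*} [NormedAddCommGroup V] [InnerProductSpace ℝ V]
    (u b : V) (hb : ‖b‖ = 1) (hu : u ≠ 0)
    (h : InnerProductGeometry.angle u b ≤ π / 6) :
    Real.sqrt 3 / 2 * ‖u‖ ≤ inner ℝ u b := by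
  have hcos : Real.cos (InnerProductGeometry.angle u b) = inner ℝ u b / (‖u‖ * ‖b‖) :=
    InnerProductGeometry.cos_angle u b
  have h0 : (0:ℝ) ≤ InnerProductGeometry.angle u b := InnerProductGeometry.angle_nonneg u b
  have hle : Real.cos (π / 6) ≤ Real.cos (InnerProductGeometry.angle u b) := by
    apply Real.cos_le_cos_of_nonneg_of_le_pi h0 _ h
    linarith [Real.pi_pos]
  rw [Real.cos_pi_div_six] at hle
  have hun : (0:ℝ) < ‖u‖ := norm_pos_iff.mpr hu
  rw [hcos, hb, mul_one] at hle
  calc Real.sqrt 3 / 2 * ‖u‖ ≤ inner ℝ u b / ‖u‖ * ‖u‖ := by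
        apply mul_le_mul_of_nonneg_right hle hun.le
    _ = inner ℝ u b := by field_simp

set_option maxHeartbeats 1000000 in
theorem stmt_7 (L : Finset (EuclideanSpace ℝ (Fin 2))) (r : EuclideanSpace ℝ (Fin 2) → ℝ)
    (hr : ∀ q ∈ L, 0 < r q)
    (p b : EuclideanSpace ℝ (Fin 2)) (hb : ‖b‖ = 1)
    (hcone : ∀ q ∈ L, InnerProductGeometry.angle (q - p) b ≤ π / 6)
    (hedge : ∀ q ∈ L, dist q p ≤ r q) :
    ∀ x ∈ L, ∀ y ∈ L, r x ≤ r y → dist x y ≤ r y := by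
  intro x hx y hy hrxy
  by_cases hxp : x = p
  · rw [hxp, dist_comm]; exact hedge y hy
  by_cases hyp : y = p
  · have : dist x y ≤ r x := by rw [hyp]; exact hedge x hx
    exact this.trans hrxy
  set u := x - p with hu
  set v := y - p with hv
  have hu0 : u ≠ 0 := sub_ne_zero.mpr hxp
  have hv0 : v ≠ 0 := sub_ne_zero.mpr hyp
  have hau : Real.sqrt 3 / 2 * ‖u‖ ≤ inner ℝ u b := inner_b_ge u b hb hu0 (hcone x hx)
  have hav : Real.sqrt 3 / 2 * ‖v‖ ≤ inner ℝ v b := inner_b_ge v b hb hv0 (hcone y hy)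
  set a : ℝ := inner ℝ u b with ha
  set c : ℝ := inner ℝ v b with hc
  -- orthogonal components
  have hb2 : (inner ℝ b b : ℝ) = 1 := by
    rw [real_inner_self_eq_norm_sq, hb]; norm_num
  have huperp : ‖u - a • b‖ ^ 2 = ‖u‖ ^ 2 - a ^ 2 := by
    rw [← real_inner_self_eq_norm_sq]
    simp only [inner_sub_sub_self, inner_smul_left, inner_smul_right, hb2,
      real_inner_self_eq_norm_sq, real_inner_comm u b, ← ha]
    ring
  have hvperp : ‖v - c • b‖ ^ 2 = ‖v‖ ^ 2 - c ^ 2 := by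
    rw [← real_inner_self_eq_norm_sq]
    simp only [inner_sub_sub_self, inner_smul_left, inner_smul_right, hb2,
      real_inner_self_eq_norm_sq, real_inner_comm v b, ← hc]
    ring
  have hinner : (inner ℝ u v : ℝ) = a * c + inner ℝ (u - a • b) (v - c • b) := by
    simp only [inner_sub_left, inner_sub_right, real_inner_smul_left, real_inner_smul_right, hb2,
      ← ha]
    have hbv : (inner ℝ b v : ℝ) = c := by rw [hc]; exact (real_inner_comm b v).symm
    rw [hbv]; ring
  have hcs : |(inner ℝ (u - a • b) (v - c • b) : ℝ)| ≤ ‖u - a • b‖ * ‖v - c • b‖ :=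
    abs_real_inner_le_norm _ _
  -- bounds on perp norms
  have h3 : Real.sqrt 3 ^ 2 = 3 := Real.sq_sqrt (by norm_num)
  have hun : (0:ℝ) < ‖u‖ := norm_pos_iff.mpr hu0
  have hvn : (0:ℝ) < ‖v‖ := norm_pos_iff.mpr hv0
  have hau2 : 3 / 4 * ‖u‖ ^ 2 ≤ a ^ 2 := by
    have := pow_le_pow_left₀ (by positivity : (0:ℝ) ≤ Real.sqrt 3 / 2 * ‖u‖) hau 2
    nlinarith
  have hav2 : 3 / 4 * ‖v‖ ^ 2 ≤ c ^ 2 := by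
    have := pow_le_pow_left₀ (by positivity : (0:ℝ) ≤ Real.sqrt 3 / 2 * ‖v‖) hav 2
    nlinarith
  have hup : ‖u - a • b‖ ≤ ‖u‖ / 2 := by
    have h1 : ‖u - a • b‖ ^ 2 ≤ (‖u‖ / 2) ^ 2 := by rw [huperp]; nlinarith
    have := Real.sqrt_le_sqrt h1
    rwa [Real.sqrt_sq (norm_nonneg _), Real.sqrt_sq (by positivity)] at this
  have hvp : ‖v - c • b‖ ≤ ‖v‖ / 2 := by
    have h1 : ‖v - c • b‖ ^ 2 ≤ (‖v‖ / 2) ^ 2 := by rw [hvperp]; nlinarith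
    have := Real.sqrt_le_sqrt h1
    rwa [Real.sqrt_sq (norm_nonneg _), Real.sqrt_sq (by positivity)] at this
  have hac : 3 / 4 * (‖u‖ * ‖v‖) ≤ a * c := by
    have h1 : (0:ℝ) ≤ Real.sqrt 3 / 2 * ‖u‖ := by positivity
    have h2 := mul_le_mul hau hav (by positivity) (h1.trans hau)
    have heq : Real.sqrt 3 / 2 * ‖u‖ * (Real.sqrt 3 / 2 * ‖v‖) = 3 / 4 * (‖u‖ * ‖v‖) := by
      linear_combination (‖u‖ * ‖v‖ / 4) * h3
    linarith
  have hperpprod : ‖u - a • b‖ * ‖v - c • b‖ ≤ ‖u‖ / 2 * (‖v‖ / 2) := by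
    apply mul_le_mul hup hvp (norm_nonneg _) (by positivity)
  have hinnerlb : ‖u‖ * ‖v‖ / 2 ≤ inner ℝ u v := by
    have := (abs_le.mp hcs).1
    rw [hinner]
    nlinarith
  -- conclude
  have hru : ‖u‖ ≤ r y := by
    have := hedge x hx
    rw [dist_eq_norm] at this
    exact le_trans this hrxy
  have hrv : ‖v‖ ≤ r y := by
    have := hedge y hy
    rwa [dist_eq_norm] at this
  have hdist : dist x y = ‖u - v‖ := by
    rw [dist_eq_norm, hu, hv]; congr 1; abel
  have hsq : ‖u - v‖ ^ 2 ≤ (r y) ^ 2 := by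
    rw [norm_sub_sq_real]
    nlinarith
  rw [hdist]
  have := Real.sqrt_le_sqrt hsq
  rwa [Real.sqrt_sq (norm_nonneg _), Real.sqrt_sq (hr y hy).le] at this
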